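/- arXiv:2412.19042 — 5 statements merged into one kernel-verified Lean document; each statement's English description precedes it below -/
import Mathlib

section
/- If a graph G is (t1,t2)-Ramsey (every red/blue edge-coloring of G contains a red K_{t1} or a blue K_{t2}), then G contains at least binom(r(t1,t2), 2) edges, where r(t1,t2) is the Ramsey number. Consequently the size Ramsey number of (K_{t1}, K_{t2}) equals binom(r(t1,t2), 2). -/
open Finset

/-- A graph `G` is `(t₁,t₂)`-Ramsey: every red/blue coloring of its edges (given by a
red subgraph `R ≤ G`, with blue graph `G \ R`) contains a red `K_{t₁}` or a blue `K_{t₂}`. -/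
def IsRamsey {V : Type*} (G : SimpleGraph V) (t1 t2 : ℕ) : Prop :=
  ∀ R : SimpleGraph V, R ≤ G →
    (∃ s : Finset V, R.IsNClique t1 s) ∨ (∃ s : Finset V, (G \ R).IsNClique t2 s)

/-- The number of copies of `K_s` in `G`, i.e. the number of `s`-cliques. -/
noncomputable def cliqueCount {V : Type*} [Fintype V] (G : SimpleGraph V) (s : ℕ) : ℕ := by
  classical exact (G.cliqueFinset s).card

/-- The Ramsey number `r(t₁,t₂)`: the least `n` such that `K_n` is `(t₁,t₂)`-Ramsey. -/
noncomputable def ramseyNumber (t1 t2 : ℕ) : ℕ :=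
  sInf {n | IsRamsey (⊤ : SimpleGraph (Fin n)) t1 t2}

/-- The `K_s`-Ramsey number `r_{K_s}(t₁,t₂)`: the minimum number of copies of `K_s`
in a `(t₁,t₂)`-Ramsey graph. -/
noncomputable def ramseyCliqueNumber (s t1 t2 : ℕ) : ℕ :=
  sInf {N | ∃ (n : ℕ) (G : SimpleGraph (Fin n)), IsRamsey G t1 t2 ∧ cliqueCount G s = N}

/-- The number of independent sets of size `t` in `H`. -/
noncomputable def indepCount {V : Type*} [Fintype V] (H : SimpleGraph V) (t : ℕ) : ℕ :=
  cliqueCount Hᶜ t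

open SimpleGraph

lemma ramsey_exists (t1 t2 : ℕ) :
    ∃ n : ℕ, ∀ (V : Type) [Fintype V], n ≤ Fintype.card V →
      IsRamsey (⊤ : SimpleGraph V) t1 t2 := by
  induction t1 generalizing t2 with
  | zero =>
    exact ⟨0, fun V _ _ R _ => Or.inl ⟨∅, by simp [SimpleGraph.isNClique_empty]⟩⟩
  | succ t1 ih =>
    induction t2 with
    | zero =>
      exact ⟨0, fun V _ _ R _ => Or.inr ⟨∅, by simp [SimpleGraph.isNClique_empty]⟩⟩
    | succ t2 ih2 =>
      obtain ⟨n1, h1⟩ := ih (t2 + 1)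
      obtain ⟨n2, h2⟩ := ih2
      refine ⟨n1 + n2 + 1, fun V _ hV R _ => ?_⟩
      classical
      obtain ⟨v⟩ : Nonempty V := Fintype.card_pos_iff.mp (by omega)
      set Nr : Finset V := univ.filter (fun u => R.Adj v u) with hNr
      set Nb : Finset V := univ.filter (fun u => u ≠ v ∧ ¬ R.Adj v u) with hNb
      have hsub : univ.erase v ⊆ Nr ∪ Nb := by
        intro u hu
        simp only [mem_erase, mem_univ, and_true] at hu
        by_cases h : R.Adj v u <;> simp [hNr, hNb, h, hu]
      have hcard : n1 + n2 ≤ Nr.card + Nb.card := by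
        have := (card_le_card hsub).trans (card_union_le _ _)
        have h2 : (univ.erase v).card = Fintype.card V - 1 := by
          rw [card_erase_of_mem (mem_univ v), card_univ]
        omega
      by_cases hr : n1 ≤ Nr.card
      · -- restrict to red neighborhood
        set W := {u : V // u ∈ Nr}
        have hWcard : n1 ≤ Fintype.card W := by
          rw [Fintype.card_coe]; exact hr
        set R' : SimpleGraph W := SimpleGraph.mk (fun a b => R.Adj a b)
          ⟨fun a b h => R.adj_symm h⟩ ⟨fun a h => R.irrefl h⟩ with hR'
        rcases h1 W hWcard R' le_top with ⟨s, hs⟩ | ⟨s, hs⟩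
        · -- red t1-clique in R'; add v
          refine Or.inl ⟨insert v (s.image Subtype.val), ?_⟩
          have hvn : v ∉ s.image Subtype.val := by
            simp only [mem_image, not_exists]
            rintro ⟨u, hu⟩ ⟨_, h⟩
            have h' : u = v := h
            subst h'
            simp only [hNr, mem_filter] at hu
            exact R.irrefl hu.2
          constructor
          · intro a ha b hb hab
            simp only [coe_insert, Set.mem_insert_iff, coe_image, Set.mem_image,
              mem_coe] at ha hb
            rcases ha with rfl | ⟨x, hx, rfl⟩
            · rcases hb with rfl | ⟨y, hy, rfl⟩
              · exact absurd rfl hab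
              · have := y.2; simp only [hNr, mem_filter] at this; exact this.2
            · rcases hb with rfl | ⟨y, hy, rfl⟩
              · have := x.2; simp only [hNr, mem_filter] at this
                exact (this.2).symm
              · have hxy : x ≠ y := fun h => hab (by rw [h])
                exact hs.1 hx hy hxy
          · rw [card_insert_of_notMem hvn,
              card_image_of_injective _ Subtype.val_injective, hs.2]
        · -- blue (t2+1)-clique
          refine Or.inr ⟨s.image Subtype.val, ?_⟩
          constructor
          · intro a ha b hb hab
            simp only [coe_image, Set.mem_image, mem_coe] at ha hb
            obtain ⟨x, hx, rfl⟩ := ha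
            obtain ⟨y, hy, rfl⟩ := hb
            have hxy : x ≠ y := fun h => hab (by rw [h])
            have := hs.1 hx hy hxy
            rw [SimpleGraph.sdiff_adj] at this ⊢
            exact ⟨hab, this.2⟩
          · rw [card_image_of_injective _ Subtype.val_injective, hs.2]
      · -- blue neighborhood case
        have hb2 : n2 ≤ Nb.card := by omega
        set W := {u : V // u ∈ Nb}
        have hWcard : n2 ≤ Fintype.card W := by
          rw [Fintype.card_coe]; exact hb2
        set R' : SimpleGraph W := SimpleGraph.mk (fun a b => R.Adj a b)
          ⟨fun a b h => R.adj_symm h⟩ ⟨fun a h => R.irrefl h⟩ with hR'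
        rcases h2 W hWcard R' le_top with ⟨s, hs⟩ | ⟨s, hs⟩
        · refine Or.inl ⟨s.image Subtype.val, ?_⟩
          constructor
          · intro a ha b hb hab
            simp only [coe_image, Set.mem_image, mem_coe] at ha hb
            obtain ⟨x, hx, rfl⟩ := ha
            obtain ⟨y, hy, rfl⟩ := hb
            have hxy : x ≠ y := fun h => hab (by rw [h])
            exact hs.1 hx hy hxy
          · rw [card_image_of_injective _ Subtype.val_injective, hs.2]
        · refine Or.inr ⟨insert v (s.image Subtype.val), ?_⟩
          have hvn : v ∉ s.image Subtype.val := by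
            simp only [mem_image, not_exists]
            rintro ⟨u, hu⟩ ⟨_, h⟩
            have h' : u = v := h
            subst h'
            simp only [hNb, mem_filter] at hu
            exact hu.2.1 rfl
          constructor
          · intro a ha b hb hab
            simp only [coe_insert, Set.mem_insert_iff, coe_image, Set.mem_image,
              mem_coe] at ha hb
            rcases ha with rfl | ⟨x, hx, rfl⟩
            · rcases hb with rfl | ⟨y, hy, rfl⟩
              · exact absurd rfl hab
              · have := y.2; simp only [hNb, mem_filter] at this
                rw [SimpleGraph.sdiff_adj]
                exact ⟨(SimpleGraph.top_adj _ _).mpr hab, this.2.2⟩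
            · rcases hb with rfl | ⟨y, hy, rfl⟩
              · have := x.2; simp only [hNb, mem_filter] at this
                rw [SimpleGraph.sdiff_adj]
                exact ⟨(SimpleGraph.top_adj _ _).mpr hab, fun h => this.2.2 h.symm⟩
              · have hxy : x ≠ y := fun h => hab (by rw [h])
                have := hs.1 hx hy hxy
                rw [SimpleGraph.sdiff_adj] at this ⊢
                exact ⟨(SimpleGraph.top_adj _ _).mpr hab, this.2⟩
          · rw [card_insert_of_notMem hvn,
              card_image_of_injective _ Subtype.val_injective, hs.2]

lemma isRamsey_of_colorable {V : Type} [Fintype V] {G : SimpleGraph V} {t1 t2 m : ℕ}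
    (hG : IsRamsey G t1 t2) (hc : G.Colorable m) :
    IsRamsey (⊤ : SimpleGraph (Fin m)) t1 t2 := by
  classical
  obtain ⟨c⟩ := hc
  intro R _
  set R' : SimpleGraph V := SimpleGraph.mk
      (fun u w => G.Adj u w ∧ R.Adj (c u) (c w))
      ⟨fun u w h => ⟨h.1.symm, h.2.symm⟩⟩
      ⟨fun u h => G.irrefl h.1⟩ with hR'
  have hle : R' ≤ G := fun u w h => h.1
  rcases hG R' hle with ⟨s, hs⟩ | ⟨s, hs⟩
  · refine Or.inl ⟨s.image c, ?_⟩
    constructor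
    · intro i hi j hj hij
      simp only [coe_image, Set.mem_image, mem_coe] at hi hj
      obtain ⟨a, ha, rfl⟩ := hi
      obtain ⟨b, hb, rfl⟩ := hj
      have hab : a ≠ b := fun h => hij (by rw [h])
      exact (hs.1 ha hb hab).2
    · rw [card_image_of_injOn, hs.2]
      intro a ha b hb hcab
      by_contra hab
      exact c.valid (hs.1 ha hb hab).1 hcab
  · refine Or.inr ⟨s.image c, ?_⟩
    constructor
    · intro i hi j hj hij
      simp only [coe_image, Set.mem_image, mem_coe] at hi hj
      obtain ⟨a, ha, rfl⟩ := hi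
      obtain ⟨b, hb, rfl⟩ := hj
      have hab : a ≠ b := fun h => hij (by rw [h])
      have := hs.1 ha hb hab
      rw [SimpleGraph.sdiff_adj] at this ⊢
      exact ⟨(SimpleGraph.top_adj _ _).mpr hij, fun h => this.2 ⟨this.1, h⟩⟩
    · rw [card_image_of_injOn, hs.2]
      intro a ha b hb hcab
      by_contra hab
      exact c.valid (hs.1 ha hb hab).1 hcab

lemma edges_of_not_colorable {V : Type} [Fintype V] {G : SimpleGraph V} [DecidableRel G.Adj]
    {m : ℕ} (h : ¬ G.Colorable m) : (m + 1).choose 2 ≤ G.edgeFinset.card := by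
  classical
  set k := sInf {n | G.Colorable n} with hk
  have hne : Set.Nonempty {n | G.Colorable n} := ⟨Fintype.card V, G.colorable_of_fintype⟩
  have hkmem : G.Colorable k := Nat.sInf_mem hne
  have hkm : m + 1 ≤ k := by
    by_contra hlt
    exact h (hkmem.mono (by omega))
  obtain ⟨c⟩ := hkmem
  -- every pair of colors is realized by an edge
  have key : ∀ i j : Fin k, i ≠ j → ∃ u v : V, G.Adj u v ∧ c u = i ∧ c v = j := by
    intro i j hij
    by_contra hno
    push_neg at hno
    -- merge color j into i
    have hcol : G.Colorable (k - 1) := by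
      have hcard : Fintype.card {x : Fin k // x ≠ j} = k - 1 := by
        have := Fintype.card_subtype_compl (fun x : Fin k => x = j)
        set_option linter.unnecessarySimpa false in
        simpa [Fintype.card_subtype_eq] using this
      rw [← hcard]
      refine (SimpleGraph.Coloring.mk (fun v => if hv : c v = j then ⟨i, hij⟩
        else ⟨c v, hv⟩) ?_).colorable
      intro u v huv heq
      have hcuv : c u ≠ c v := c.valid huv
      by_cases hu : c u = j <;> by_cases hv : c v = j
      · exact hcuv (hu.trans hv.symm)
      · rw [dif_pos hu, dif_neg hv] at heq
        have hvi : c v = i := (congrArg Subtype.val heq).symm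
        exact hno v u (G.adj_symm huv) hvi hu
      · rw [dif_neg hu, dif_pos hv] at heq
        have hui : c u = i := congrArg Subtype.val heq
        exact hno u v huv hui hv
      · rw [dif_neg hu, dif_neg hv] at heq
        exact hcuv (congrArg Subtype.val heq)
    have : k ≤ k - 1 := Nat.sInf_le hcol
    omega
  have hbound : ((⊤ : SimpleGraph (Fin k)).edgeFinset).card ≤ G.edgeFinset.card := by
    apply card_le_card_of_surjOn (Sym2.map c)
    intro e he
    induction e with
    | _ i j =>
      simp only [Set.mem_setOf_eq, mem_coe, mem_edgeFinset, mem_edgeSet] at he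
      have hij : i ≠ j := he
      obtain ⟨u, v, huv, hu, hv⟩ := key i j hij
      refine ⟨s(u, v), ?_, ?_⟩
      · simp [huv]
      · simp [Sym2.map_pair_eq, hu, hv]
  have htop : ((⊤ : SimpleGraph (Fin k)).edgeFinset).card = k.choose 2 := by
    rw [SimpleGraph.card_edgeFinset_top_eq_card_choose_two, Fintype.card_fin]
  calc (m + 1).choose 2 ≤ k.choose 2 := Nat.choose_le_choose 2 hkm
    _ ≤ G.edgeFinset.card := htop ▸ hbound

lemma cliqueCount_eq {V : Type} [Fintype V] [DecidableEq V] (G : SimpleGraph V)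
    [DecidableRel G.Adj] (n : ℕ) : cliqueCount G n = (G.cliqueFinset n).card := by
  unfold cliqueCount
  refine Finset.card_bij (fun s _ => s) ?_ ?_ ?_ <;>
    simp only [SimpleGraph.mem_cliqueFinset_iff]
  · exact fun a ha => ha
  · exact fun a _ b _ h => h
  · exact fun a ha => ⟨a, ha, rfl⟩

lemma cliqueCount_two {V : Type} [Fintype V] [DecidableEq V] (G : SimpleGraph V)
    [DecidableRel G.Adj] [Fintype G.edgeSet] : cliqueCount G 2 = G.edgeFinset.card := by
  classical
  rw [cliqueCount_eq]
  symm
  refine Finset.card_bij (fun e _ => Sym2.lift ⟨fun a b => ({a, b} : Finset V),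
    fun a b => by simp [Finset.pair_comm]⟩ e) ?_ ?_ ?_
  · intro e he
    induction e with
    | _ a b =>
      simp only [mem_edgeFinset, mem_edgeSet] at he
      simp only [Sym2.lift_mk]
      rw [SimpleGraph.mem_cliqueFinset_iff]
      refine ⟨?_, card_pair he.ne⟩
      rw [coe_insert, coe_singleton]
      exact SimpleGraph.isClique_pair.mpr fun _ => he
  · intro e1 h1 e2 h2 heq
    induction e1 with
    | _ a b =>
      induction e2 with
      | _ c d =>
        simp only [mem_edgeFinset, mem_edgeSet] at h1 h2
        simp only [Sym2.lift_mk] at heq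
        have hab : a ≠ b := h1.ne
        have : a ∈ ({c, d} : Finset V) := heq ▸ (by simp : a ∈ ({a, b} : Finset V))
        have hb : b ∈ ({c, d} : Finset V) := heq ▸ (by simp : b ∈ ({a, b} : Finset V))
        simp only [mem_insert, mem_singleton] at this hb
        rw [Sym2.eq_iff]
        rcases this with rfl | rfl
        · rcases hb with rfl | rfl
          · exact absurd rfl hab
          · exact Or.inl ⟨rfl, rfl⟩
        · rcases hb with rfl | rfl
          · exact Or.inr ⟨rfl, rfl⟩
          · exact absurd rfl hab
  · intro s hs
    rw [SimpleGraph.mem_cliqueFinset_iff] at hs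
    obtain ⟨a, b, hab, rfl⟩ := Finset.card_eq_two.mp hs.2
    have hadj : G.Adj a b := hs.1 (by simp) (by simp) hab
    exact ⟨s(a, b), by simp [hadj], by simp⟩

/-- If a graph `G` is `(t₁,t₂)`-Ramsey then it has at least `C(r(t₁,t₂),2)` edges;
consequently the size Ramsey number (minimum number of copies of `K₂` in a
`(t₁,t₂)`-Ramsey graph) equals `C(r(t₁,t₂),2)`. -/
theorem stmt0 (t1 t2 : ℕ) :
    (∀ (V : Type) [Fintype V] (G : SimpleGraph V) [DecidableRel G.Adj],
        IsRamsey G t1 t2 → (ramseyNumber t1 t2).choose 2 ≤ G.edgeFinset.card) ∧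
      ramseyCliqueNumber 2 t1 t2 = (ramseyNumber t1 t2).choose 2 := by
  classical
  obtain ⟨n0, hn0⟩ := ramsey_exists t1 t2
  have hne : Set.Nonempty {n | IsRamsey (⊤ : SimpleGraph (Fin n)) t1 t2} :=
    ⟨n0, hn0 (Fin n0) (by simp)⟩
  have hrmem : IsRamsey (⊤ : SimpleGraph (Fin (ramseyNumber t1 t2))) t1 t2 :=
    Nat.sInf_mem hne
  have part1 : ∀ (V : Type) [Fintype V] (G : SimpleGraph V) [DecidableRel G.Adj],
      IsRamsey G t1 t2 → (ramseyNumber t1 t2).choose 2 ≤ G.edgeFinset.card := by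
    intro V _ G _ hG
    by_cases h2 : 2 ≤ ramseyNumber t1 t2
    · have hnc : ¬ G.Colorable (ramseyNumber t1 t2 - 1) := by
        intro hc
        have hmem := isRamsey_of_colorable hG hc
        have hle : ramseyNumber t1 t2 ≤ ramseyNumber t1 t2 - 1 := Nat.sInf_le hmem
        omega
      have hb := edges_of_not_colorable hnc
      have hr1 : ramseyNumber t1 t2 - 1 + 1 = ramseyNumber t1 t2 := by omega
      rwa [hr1] at hb
    · rw [Nat.choose_eq_zero_of_lt (by omega)]
      exact Nat.zero_le _
  refine ⟨part1, ?_⟩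
  have htopcount : cliqueCount (⊤ : SimpleGraph (Fin (ramseyNumber t1 t2))) 2 =
      (ramseyNumber t1 t2).choose 2 := by
    rw [cliqueCount_two, SimpleGraph.card_edgeFinset_top_eq_card_choose_two,
      Fintype.card_fin]
  have hmem2 : (ramseyNumber t1 t2).choose 2 ∈
      {N | ∃ (n : ℕ) (G : SimpleGraph (Fin n)), IsRamsey G t1 t2 ∧ cliqueCount G 2 = N} :=
    ⟨ramseyNumber t1 t2, ⊤, hrmem, htopcount⟩
  refine le_antisymm (Nat.sInf_le hmem2) ?_
  obtain ⟨n, G, hG, hcount⟩ :=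
    Nat.sInf_mem (⟨_, hmem2⟩ : Set.Nonempty
      {N | ∃ (n : ℕ) (G : SimpleGraph (Fin n)), IsRamsey G t1 t2 ∧ cliqueCount G 2 = N})
  rw [show sInf {N | ∃ (n : ℕ) (G : SimpleGraph (Fin n)),
      IsRamsey G t1 t2 ∧ cliqueCount G 2 = N} = ramseyCliqueNumber 2 t1 t2 from rfl] at hcount
  rw [← hcount, cliqueCount_two]
  exact part1 (Fin n) G hG
end

section
/- Let H be a graph on n vertices, and let r, R be positive integers and α ∈ [0,1] satisfy e^{-αr}·n ≤ R, and suppose every subset X ⊆ V(H) with |X| ≥ R satisfies 2·e(H[X]) ≥ α|X|². Then for any t ≥ r, the number of independent sets of size t in H is at most binom(n,r)·binom(R, t−r). -/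
open Finset

/-- The number of edges of `H` inside the vertex set `X`. -/
noncomputable def edgeCountOn {V : Type*} [Fintype V] (H : SimpleGraph V) (X : Finset V) : ℕ := by
  classical exact (H.edgeFinset.filter (fun e => ∀ v ∈ e, v ∈ X)).card

section Aux
variable {V : Type*} [Fintype V] [DecidableEq V] (H : SimpleGraph V) [DecidableRel H.Adj]

noncomputable def pkey (X : Finset V) (v : V) : ℕ :=
  (X ∩ H.neighborFinset v).card * Fintype.card V + ((Fintype.equivFin V) v : ℕ)

noncomputable def pick (X : Finset V) (hX : X.Nonempty) : V :=
  (X.exists_max_image (pkey H X) hX).choose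

lemma pick_mem (X : Finset V) (hX : X.Nonempty) : pick H X hX ∈ X :=
  (X.exists_max_image (pkey H X) hX).choose_spec.1

lemma pick_deg_max (X : Finset V) (hX : X.Nonempty) :
    ∀ w ∈ X, (X ∩ H.neighborFinset w).card ≤ (X ∩ H.neighborFinset (pick H X hX)).card := by
  intro w hw
  have hk := (X.exists_max_image (pkey H X) hX).choose_spec.2 w hw
  have hk' : pkey H X w ≤ pkey H X (pick H X hX) := hk
  unfold pkey at hk'
  by_contra hlt
  push_neg at hlt
  have h1 : ((Fintype.equivFin V) w : ℕ) < Fintype.card V := ((Fintype.equivFin V) w).2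
  have h2 : (X ∩ H.neighborFinset (pick H X hX)).card * Fintype.card V + Fintype.card V
      ≤ (X ∩ H.neighborFinset w).card * Fintype.card V := by
    have := Nat.mul_le_mul_right (Fintype.card V) (Nat.succ_le_of_lt hlt)
    calc (X ∩ H.neighborFinset (pick H X hX)).card * Fintype.card V + Fintype.card V
        = ((X ∩ H.neighborFinset (pick H X hX)).card + 1) * Fintype.card V := by ring
      _ ≤ _ := this
  omega

noncomputable def runP (S : Finset V) : ℕ → Finset V → Finset V
  | 0, X => X
  | n+1, X =>
    if h : (S ∩ X).Nonempty then
      let v := pick H X (h.mono inter_subset_right)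
      runP S n (if v ∈ S then X \ insert v (H.neighborFinset v) else X.erase v)
    else X

noncomputable def genP (I : Finset V) : ℕ → ℕ → Finset V → Finset V × Finset V
  | 0, _, X => (∅, X)
  | _+1, 0, X => (∅, X)
  | n+1, k+1, X =>
    if h : (I ∩ X).Nonempty then
      let v := pick H X (h.mono inter_subset_right)
      if v ∈ I then
        let p := genP I n k (X \ insert v (H.neighborFinset v))
        (insert v p.1, p.2)
      else
        genP I n (k+1) (X.erase v)
    else (∅, X)

lemma runP_empty : ∀ n X, runP H (∅ : Finset V) n X = X := by
  intro n X
  cases n with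
  | zero => rfl
  | succ n => rw [runP]; simp

lemma genP_snd_subset (I : Finset V) : ∀ n k X, (genP H I n k X).2 ⊆ X := by
  intro n
  induction n with
  | zero => intro k X; rw [genP]
  | succ n ih =>
    intro k X
    cases k with
    | zero => rw [genP]
    | succ k =>
      rw [genP]
      split_ifs with h
      · dsimp only
        split_ifs with hvI
        · exact (ih k _).trans sdiff_subset
        · exact (ih (k+1) _).trans (erase_subset _ _)
      · exact le_refl X

lemma runP_insert (v : V) : ∀ (n : ℕ) (X S : Finset V), v ∉ X →
    runP H (insert v S) n X = runP H S n X := by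
  intro n
  induction n with
  | zero => intro X S hv; rfl
  | succ n ih =>
    intro X S hv
    rw [runP, runP]
    have hST : insert v S ∩ X = S ∩ X := insert_inter_of_notMem hv
    simp only [hST]
    by_cases h : (S ∩ X).Nonempty
    · rw [dif_pos h, dif_pos h]
      have hu : pick H X (h.mono inter_subset_right) ∈ X := pick_mem _ _ _
      have hiff : pick H X (h.mono inter_subset_right) ∈ insert v S ↔
          pick H X (h.mono inter_subset_right) ∈ S := by
        constructor
        · intro hm
          rcases mem_insert.1 hm with h' | h'
          · exact absurd (h' ▸ hu) hv
          · exact h'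
        · exact fun hm => mem_insert_of_mem hm
      rw [if_congr hiff rfl rfl]
      apply ih
      intro hvmem
      split_ifs at hvmem with h'
      · exact hv (mem_sdiff.1 hvmem).1
      · exact hv (mem_of_mem_erase hvmem)
    · rw [dif_neg h, dif_neg h]

lemma genP_spec (I : Finset V) (hI : ∀ v ∈ I, ∀ w ∈ I, ¬ H.Adj v w) :
    ∀ n k X, X.card ≤ n → k ≤ (I ∩ X).card →
      (genP H I n k X).1 ⊆ I ∩ X ∧ (genP H I n k X).1.card = k ∧
      I ∩ (genP H I n k X).2 = (I ∩ X) \ (genP H I n k X).1 ∧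
      runP H (genP H I n k X).1 n X = (genP H I n k X).2 := by
  intro n
  induction n with
  | zero =>
    intro k X hXn hk
    have hX : X = ∅ := card_eq_zero.1 (Nat.le_zero.1 hXn)
    subst hX
    simp only [inter_empty, card_empty, Nat.le_zero] at hk
    subst hk
    rw [genP]
    exact ⟨by simp, rfl, by simp, rfl⟩
  | succ n ih =>
    intro k X hXn hk
    cases k with
    | zero =>
      rw [genP]
      exact ⟨by simp, rfl, by simp, runP_empty H _ _⟩
    | succ k =>
      have h : (I ∩ X).Nonempty := card_pos.1 (lt_of_lt_of_le k.succ_pos hk)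
      rw [genP, dif_pos h]
      set v := pick H X (h.mono inter_subset_right) with hvdef
      have hvX : v ∈ X := pick_mem _ _ _
      by_cases hvI : v ∈ I
      · rw [if_pos hvI]
        set X' := X \ insert v (H.neighborFinset v) with hX'def
        have hvX' : v ∉ X' := by simp [hX'def]
        have hIX' : I ∩ X' = (I ∩ X).erase v := by
          ext u
          simp only [hX'def, mem_inter, mem_sdiff, mem_insert, SimpleGraph.mem_neighborFinset,
            mem_erase, not_or]
          constructor
          · rintro ⟨huI, huX, hne, _⟩
            exact ⟨hne, huI, huX⟩
          · rintro ⟨hne, huI, huX⟩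
            exact ⟨huI, huX, hne, hI v hvI u huI⟩
        have hvIX : v ∈ I ∩ X := mem_inter.2 ⟨hvI, hvX⟩
        have hcard' : X'.card ≤ n := by
          have h1 : X' ⊆ X.erase v := by
            rw [erase_eq]
            exact sdiff_subset_sdiff (le_refl X) (by simp)
          have h2 := card_le_card h1
          rw [card_erase_of_mem hvX] at h2
          have h3 : 1 ≤ X.card := card_pos.2 ⟨v, hvX⟩
          omega
        have hk' : k ≤ (I ∩ X').card := by
          rw [hIX', card_erase_of_mem hvIX]
          omega
        obtain ⟨hs1, hs2, hs3, hs4⟩ := ih k X' hcard' hk'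
        set p := genP H I n k X' with hpdef
        have hvp1 : v ∉ p.1 := fun hmem => hvX' (mem_inter.1 (hs1 hmem)).2
        refine ⟨?_, ?_, ?_, ?_⟩
        · exact insert_subset hvIX (hs1.trans (inter_subset_inter (le_refl I) sdiff_subset))
        · show (insert v p.1).card = k + 1
          rw [card_insert_of_notMem hvp1, hs2]
        · show I ∩ p.2 = (I ∩ X) \ insert v p.1
          rw [hs3, hIX']
          ext u
          simp only [mem_sdiff, mem_erase, mem_insert, not_or]
          tauto
        · show runP H (insert v p.1) (n+1) X = p.2
          have hcond : (insert v p.1 ∩ X).Nonempty :=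
            ⟨v, mem_inter.2 ⟨mem_insert_self _ _, hvX⟩⟩
          rw [runP, dif_pos hcond]
          have hpick : pick H X (hcond.mono inter_subset_right) = v := rfl
          rw [hpick]
          dsimp only
          rw [if_pos (mem_insert_self v p.1)]
          rw [← hX'def, runP_insert H v n X' p.1 hvX', hs4]
      · rw [if_neg hvI]
        have hIXe : I ∩ X.erase v = I ∩ X := by
          ext u
          simp only [mem_inter, mem_erase]
          constructor
          · rintro ⟨huI, _, huX⟩
            exact ⟨huI, huX⟩
          · rintro ⟨huI, huX⟩
            exact ⟨huI, fun h' => hvI (h' ▸ huI), huX⟩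
        have hcard' : (X.erase v).card ≤ n := by
          rw [card_erase_of_mem hvX]
          have h3 : 1 ≤ X.card := card_pos.2 ⟨v, hvX⟩
          omega
        have hk' : k + 1 ≤ (I ∩ X.erase v).card := by rw [hIXe]; exact hk
        obtain ⟨hs1, hs2, hs3, hs4⟩ := ih (k+1) (X.erase v) hcard' hk'
        set p := genP H I n (k+1) (X.erase v) with hpdef
        refine ⟨hs1.trans (by rw [hIXe]), hs2, by rw [hs3, hIXe], ?_⟩
        · have hp1 : p.1.Nonempty := card_pos.1 (by rw [hs2]; exact k.succ_pos)
          obtain ⟨u, hu⟩ := hp1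
          have huX : u ∈ X := mem_of_mem_erase (mem_inter.1 (hs1 hu)).2
          have hcond : (p.1 ∩ X).Nonempty := ⟨u, mem_inter.2 ⟨hu, huX⟩⟩
          rw [runP, dif_pos hcond]
          have hpick : pick H X (hcond.mono inter_subset_right) = v := rfl
          rw [hpick]
          dsimp only
          rw [if_neg (fun hmem => hvI ((mem_inter.1 (hs1 hmem)).1) : ¬ v ∈ p.1)]
          exact hs4

lemma genP_card (I : Finset V) (hI : ∀ v ∈ I, ∀ w ∈ I, ¬ H.Adj v w)
    (R : ℕ) (α : ℝ) (hα1 : α ≤ 1)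
    (hdeg : ∀ (X : Finset V) (hX : X.Nonempty), R ≤ X.card →
      α * X.card ≤ ((X ∩ H.neighborFinset (pick H X hX)).card : ℝ)) :
    ∀ n k X, X.card ≤ n → k ≤ (I ∩ X).card →
      ((genP H I n k X).2.card ≤ R ∨
        ((genP H I n k X).2.card : ℝ) ≤ (1-α)^k * X.card) := by
  have h1α : (0:ℝ) ≤ 1 - α := by linarith
  intro n
  induction n with
  | zero =>
    intro k X hXn hk
    left
    have := card_le_card (genP_snd_subset H I 0 k X)
    omega
  | succ n ih =>
    intro k X hXn hk
    cases k with
    | zero =>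
      right
      rw [genP]
      simp
    | succ k =>
      by_cases hXR : X.card ≤ R
      · left
        exact (card_le_card (genP_snd_subset H I (n+1) (k+1) X)).trans hXR
      push_neg at hXR
      have h : (I ∩ X).Nonempty := card_pos.1 (lt_of_lt_of_le k.succ_pos hk)
      rw [genP, dif_pos h]
      set v := pick H X (h.mono inter_subset_right) with hvdef
      have hvX : v ∈ X := pick_mem _ _ _
      by_cases hvI : v ∈ I
      · rw [if_pos hvI]
        dsimp only
        set X' := X \ insert v (H.neighborFinset v) with hX'def
        have hIX' : I ∩ X' = (I ∩ X).erase v := by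
          ext u
          simp only [hX'def, mem_inter, mem_sdiff, mem_insert, SimpleGraph.mem_neighborFinset,
            mem_erase, not_or]
          constructor
          · rintro ⟨huI, huX, hne, _⟩
            exact ⟨hne, huI, huX⟩
          · rintro ⟨hne, huI, huX⟩
            exact ⟨huI, huX, hne, hI v hvI u huI⟩
        have hvIX : v ∈ I ∩ X := mem_inter.2 ⟨hvI, hvX⟩
        have hcard' : X'.card ≤ n := by
          have h1 : X' ⊆ X.erase v := by
            rw [erase_eq]
            exact sdiff_subset_sdiff (le_refl X) (by simp)
          have h2 := card_le_card h1
          rw [card_erase_of_mem hvX] at h2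
          have h3 : 1 ≤ X.card := card_pos.2 ⟨v, hvX⟩
          omega
        have hk' : k ≤ (I ∩ X').card := by
          rw [hIX', card_erase_of_mem hvIX]
          omega
        -- size decrease
        have hstep : (X'.card : ℝ) ≤ (1 - α) * X.card := by
          have hsplit : X'.card + (X ∩ insert v (H.neighborFinset v)).card = X.card :=
            card_sdiff_add_card_inter X _
          have hsub : X ∩ H.neighborFinset v ⊆ X ∩ insert v (H.neighborFinset v) :=
            inter_subset_inter (le_refl X) (subset_insert _ _)
          have hdegv : α * X.card ≤ ((X ∩ H.neighborFinset v).card : ℝ) :=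
            hdeg X (h.mono inter_subset_right) (le_of_lt hXR)
          have h4 := card_le_card hsub
          have h5 : ((X ∩ insert v (H.neighborFinset v)).card : ℝ) ≥ α * X.card := by
            calc α * X.card ≤ ((X ∩ H.neighborFinset v).card : ℝ) := hdegv
              _ ≤ _ := by exact_mod_cast h4
          have h6 : (X'.card : ℝ) + ((X ∩ insert v (H.neighborFinset v)).card : ℝ)
              = (X.card : ℝ) := by exact_mod_cast hsplit
          linarith
        rcases ih k X' hcard' hk' with hc | hc
        · left; exact hc
        · right
          calc ((genP H I n k X').2.card : ℝ) ≤ (1-α)^k * X'.card := hc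
            _ ≤ (1-α)^k * ((1-α) * X.card) := by
                apply mul_le_mul_of_nonneg_left hstep (pow_nonneg h1α k)
            _ = (1-α)^(k+1) * X.card := by ring
      · rw [if_neg hvI]
        have hIXe : I ∩ X.erase v = I ∩ X := by
          ext u
          simp only [mem_inter, mem_erase]
          constructor
          · rintro ⟨huI, _, huX⟩
            exact ⟨huI, huX⟩
          · rintro ⟨huI, huX⟩
            exact ⟨huI, fun h' => hvI (h' ▸ huI), huX⟩
        have hcard' : (X.erase v).card ≤ n := by
          rw [card_erase_of_mem hvX]
          have h3 : 1 ≤ X.card := card_pos.2 ⟨v, hvX⟩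
          omega
        have hk' : k + 1 ≤ (I ∩ X.erase v).card := by rw [hIXe]; exact hk
        rcases ih (k+1) (X.erase v) hcard' hk' with hc | hc
        · left; exact hc
        · right
          calc ((genP H I n (k+1) (X.erase v)).2.card : ℝ)
              ≤ (1-α)^(k+1) * (X.erase v).card := hc
            _ ≤ (1-α)^(k+1) * X.card := by
                apply mul_le_mul_of_nonneg_left _ (pow_nonneg h1α (k+1))
                exact_mod_cast card_le_card (erase_subset _ _)

lemma deg_sum_bound (X : Finset V) :
    2 * (H.edgeFinset.filter (fun e => ∀ v ∈ e, v ∈ X)).card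
      ≤ ∑ w ∈ X, (X ∩ H.neighborFinset w).card := by
  set F := H.edgeFinset.filter (fun e => ∀ v ∈ e, v ∈ X) with hF
  set D := (X ×ˢ X).filter (fun p => H.Adj p.1 p.2) with hD
  have hDmem : ∀ p ∈ D, p.1 ∈ X ∧ p.2 ∈ X ∧ H.Adj p.1 p.2 := by
    intro p hp
    rw [hD, mem_filter, mem_product] at hp
    exact ⟨hp.1.1, hp.1.2, hp.2⟩
  have hDcard : D.card = ∑ w ∈ X, (X ∩ H.neighborFinset w).card := by
    rw [card_eq_sum_card_fiberwise (f := Prod.fst) (t := X) (fun p hp => (hDmem p hp).1)]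
    refine sum_congr rfl fun w hw => ?_
    apply card_bij (fun p _ => p.2)
    · intro p hp
      rw [mem_filter] at hp
      obtain ⟨h1, h2, h3⟩ := hDmem p hp.1
      rw [mem_inter, SimpleGraph.mem_neighborFinset]
      exact ⟨h2, hp.2 ▸ h3⟩
    · intro p hp q hq hpq
      exact Prod.ext (by rw [(mem_filter.1 hp).2, (mem_filter.1 hq).2]) hpq
    · intro u hu
      rw [mem_inter, SimpleGraph.mem_neighborFinset] at hu
      refine ⟨(w, u), ?_, rfl⟩
      rw [mem_filter]
      constructor
      · rw [hD, mem_filter, mem_product]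
        exact ⟨⟨hw, hu.1⟩, hu.2⟩
      · rfl
  have hmap : ∀ p ∈ D, Sym2.mk p.1 p.2 ∈ F := by
    intro p hp
    obtain ⟨h1, h2, h3⟩ := hDmem p hp
    rw [hF, mem_filter]
    constructor
    · rw [SimpleGraph.mem_edgeFinset]
      exact h3
    · intro v hv
      rcases Sym2.mem_iff.1 hv with rfl | rfl
      · exact h1
      · exact h2
  have hfib : ∀ e ∈ F, 2 ≤ (D.filter fun p => Sym2.mk p.1 p.2 = e).card := by
    intro e
    induction e using Sym2.ind with
    | _ a b =>
      intro he
      rw [hF, mem_filter, SimpleGraph.mem_edgeFinset, SimpleGraph.mem_edgeSet] at he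
      obtain ⟨hadj, hmem⟩ := he
      have haX : a ∈ X := hmem a (by simp)
      have hbX : b ∈ X := hmem b (by simp)
      have hne : a ≠ b := hadj.ne
      have hsub : ({(a,b), (b,a)} : Finset (V×V)) ⊆ D.filter fun p => Sym2.mk p.1 p.2 = s(a,b) := by
        intro p hp
        rcases mem_insert.1 hp with rfl | hp
        · rw [mem_filter]
          refine ⟨?_, rfl⟩
          rw [hD, mem_filter, mem_product]
          exact ⟨⟨haX, hbX⟩, hadj⟩
        · rw [mem_singleton.1 hp, mem_filter]
          constructor
          · rw [hD, mem_filter, mem_product]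
            exact ⟨⟨hbX, haX⟩, hadj.symm⟩
          · exact Sym2.eq_swap
      have hcard2 : ({(a,b),(b,a)} : Finset (V×V)).card = 2 := by
        rw [card_insert_of_notMem (by simp [Prod.ext_iff]; exact fun h _ => hne h),
          card_singleton]
      calc 2 = ({(a,b),(b,a)} : Finset (V×V)).card := hcard2.symm
        _ ≤ _ := card_le_card hsub
  calc 2 * F.card = ∑ _e ∈ F, 2 := by rw [sum_const, smul_eq_mul, mul_comm]
    _ ≤ ∑ e ∈ F, (D.filter fun p => Sym2.mk p.1 p.2 = e).card := sum_le_sum hfib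
    _ = D.card := (card_eq_sum_card_fiberwise hmap).symm
    _ = _ := hDcard

end Aux

theorem stmt3' {V : Type*} [Fintype V] [DecidableEq V] (H : SimpleGraph V) [DecidableRel H.Adj]
    (n r R t : ℕ) (α : ℝ)
    (hn : Fintype.card V = n) (hr : 0 < r) (hR : 0 < R)
    (hα0 : 0 ≤ α) (hα1 : α ≤ 1)
    (h1 : Real.exp (-(α * r)) * n ≤ R)
    (h2 : ∀ X : Finset V, R ≤ X.card →
      α * (X.card : ℝ) ^ 2 ≤ 2 * ((H.edgeFinset.filter (fun e => ∀ v ∈ e, v ∈ X)).card : ℝ))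
    (ht : r ≤ t) :
    (Hᶜ.cliqueFinset t).card ≤ n.choose r * R.choose (t - r) := by
  classical
  set N := Fintype.card V with hN
  -- max-degree lower bound
  have hdeg : ∀ (X : Finset V) (hX : X.Nonempty), R ≤ X.card →
      α * X.card ≤ ((X ∩ H.neighborFinset (pick H X hX)).card : ℝ) := by
    intro X hX hRX
    have hsum := deg_sum_bound H X
    have h2X := h2 X hRX
    have hmax : ∑ w ∈ X, (X ∩ H.neighborFinset w).card
        ≤ X.card * (X ∩ H.neighborFinset (pick H X hX)).card := by
      have := Finset.sum_le_card_nsmul X (fun w => (X ∩ H.neighborFinset w).card)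
        ((X ∩ H.neighborFinset (pick H X hX)).card) (fun w hw => pick_deg_max H X hX w hw)
      simpa [smul_eq_mul] using this
    have hpos : (0:ℝ) < (X.card : ℝ) := by
      exact_mod_cast lt_of_lt_of_le hR hRX
    have c1 : 2 * ((H.edgeFinset.filter (fun e => ∀ v ∈ e, v ∈ X)).card : ℝ)
        ≤ (X.card : ℝ) * ((X ∩ H.neighborFinset (pick H X hX)).card : ℝ) := by
      exact_mod_cast hsum.trans hmax
    have c2 : α * (X.card:ℝ) ^ 2
        ≤ (X.card : ℝ) * ((X ∩ H.neighborFinset (pick H X hX)).card : ℝ) :=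
      (h2X.trans c1)
    nlinarith [c2, hpos]
  -- the container of a fingerprint
  set container : Finset V → Finset V := fun S =>
    if (runP H S N univ).card ≤ R then runP H S N univ else ∅ with hcont
  have hcontR : ∀ S, (container S).card ≤ R := by
    intro S
    rw [hcont]
    dsimp only
    split_ifs with h
    · exact h
    · simp
  -- the target set
  set T : Finset ((_ : Finset V) × Finset V) :=
    (univ.powersetCard r).sigma (fun S => (container S).powersetCard (t - r)) with hT
  -- facts about members
  have hfacts : ∀ I ∈ Hᶜ.cliqueFinset t,
      (genP H I N r univ).1 ⊆ I ∧ (genP H I N r univ).1.card = r ∧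
      I \ (genP H I N r univ).1 ⊆ container (genP H I N r univ).1 ∧ I.card = t := by
    intro I hI
    rw [SimpleGraph.mem_cliqueFinset_iff] at hI
    have hIcard : I.card = t := hI.2
    have hIind : ∀ v ∈ I, ∀ w ∈ I, ¬ H.Adj v w := by
      intro v hv w hw hadj
      have hne : v ≠ w := hadj.ne
      exact (hI.1 hv hw hne).2 hadj
    have huc : (univ : Finset V).card ≤ N := le_of_eq rfl
    have hku : r ≤ (I ∩ univ).card := by
      rw [inter_univ, hIcard]; exact ht
    obtain ⟨hs1, hs2, hs3, hs4⟩ := genP_spec H I hIind N r univ huc hku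
    set S := (genP H I N r univ).1 with hSdef
    set Y := (genP H I N r univ).2 with hYdef
    have hSI : S ⊆ I := hs1.trans (by rw [inter_univ])
    have hYR : Y.card ≤ R := by
      rcases genP_card H I hIind R α hα1 hdeg N r univ huc hku with hc | hc
      · exact hc
      · have e1 : ((1:ℝ) - α) ^ r ≤ Real.exp (-(α * r)) := by
          have he : Real.exp (-(α * (r:ℕ))) = Real.exp (-α) ^ r := by
            rw [show -(α * (r:ℕ)) = (r:ℕ) * (-α) by ring, Real.exp_nat_mul]
          rw [he]
          apply pow_le_pow_left₀ (by linarith)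
          linarith [Real.add_one_le_exp (-α)]
        have e2 : ((Y.card : ℝ)) ≤ (R:ℝ) := by
          calc (Y.card : ℝ) ≤ (1-α)^r * ((univ : Finset V).card : ℝ) := hc
            _ = (1-α)^r * (n:ℝ) := by rw [card_univ, ← hN, hn]
            _ ≤ Real.exp (-(α * r)) * n := by
                apply mul_le_mul_of_nonneg_right e1 (Nat.cast_nonneg n)
            _ ≤ R := h1
        exact_mod_cast e2
    have hcontY : container S = Y := by
      rw [hcont]
      dsimp only
      rw [hs4, if_pos hYR]
    refine ⟨hSI, hs2, ?_, hIcard⟩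
    rw [hcontY]
    have hsd : I \ S = I ∩ Y := by rw [hs3, inter_univ]
    rw [hsd]
    exact inter_subset_right
  have key : (Hᶜ.cliqueFinset t).card ≤ T.card := by
    apply card_le_card_of_injOn
      (fun I => (⟨(genP H I N r univ).1, I \ (genP H I N r univ).1⟩ : (_ : Finset V) × Finset V))
    · intro I hI
      obtain ⟨hSI, hScard, hTsub, hIcard⟩ := hfacts I hI
      rw [hT, mem_coe, mem_sigma]
      constructor
      · rw [mem_powersetCard]
        exact ⟨subset_univ _, hScard⟩
      · rw [mem_powersetCard]
        exact ⟨hTsub, by rw [card_sdiff_of_subset hSI, hIcard, hScard]⟩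
    · intro I hI J hJ hEq
      have h1' : (genP H I N r univ).1 = (genP H J N r univ).1 := congrArg Sigma.fst hEq
      have h2' : I \ (genP H I N r univ).1 = J \ (genP H J N r univ).1 := by
        have := congrArg (fun s : (_ : Finset V) × Finset V => s.2) hEq
        simpa using this
      obtain ⟨hSI, _, _, _⟩ := hfacts I hI
      obtain ⟨hSJ, _, _, _⟩ := hfacts J hJ
      calc I = (genP H I N r univ).1 ∪ (I \ (genP H I N r univ).1) :=
            (union_sdiff_of_subset hSI).symm
        _ = (genP H J N r univ).1 ∪ (J \ (genP H J N r univ).1) := by rw [h2', h1']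
        _ = J := union_sdiff_of_subset hSJ
  have hTcard : T.card ≤ n.choose r * R.choose (t - r) := by
    rw [hT, card_sigma]
    calc ∑ S ∈ univ.powersetCard r, ((container S).powersetCard (t-r)).card
        ≤ ∑ _S ∈ univ.powersetCard r, R.choose (t-r) := by
          apply sum_le_sum
          intro S hS
          rw [card_powersetCard]
          exact Nat.choose_le_choose _ (hcontR S)
      _ = (univ.powersetCard r).card * R.choose (t-r) := by rw [sum_const, smul_eq_mul]
      _ = n.choose r * R.choose (t-r) := by rw [card_powersetCard, card_univ, ← hN, hn]
  exact key.trans hTcard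

/-- Mattheus–Verstraëte, Proposition 4: if `e^{-αr}·n ≤ R` and every `X` with `|X| ≥ R`
satisfies `2e(H[X]) ≥ α|X|²`, then for `t ≥ r` the number of independent sets of size `t`
in `H` is at most `C(n,r)·C(R,t−r)`. -/
theorem stmt3 {V : Type*} [Fintype V] (H : SimpleGraph V) (n r R t : ℕ) (α : ℝ)
    (hn : Fintype.card V = n) (hr : 0 < r) (hR : 0 < R)
    (hα0 : 0 ≤ α) (hα1 : α ≤ 1)
    (h1 : Real.exp (-(α * r)) * n ≤ R)
    (h2 : ∀ X : Finset V, R ≤ X.card → α * (X.card : ℝ) ^ 2 ≤ 2 * (edgeCountOn H X : ℝ))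
    (ht : r ≤ t) :
    indepCount H t ≤ n.choose r * R.choose (t - r) := by
  classical
  have hb : indepCount H t = (Hᶜ.cliqueFinset t).card := by
    unfold indepCount cliqueCount
    congr
  have he : ∀ X : Finset V, edgeCountOn H X
      = (H.edgeFinset.filter (fun e => ∀ v ∈ e, v ∈ X)).card := by
    intro X
    unfold edgeCountOn
    congr
  rw [hb]
  exact stmt3' H n r R t α hn hr hR hα0 hα1 h1 (fun X hX => by rw [← he X]; exact h2 X hX) ht
end

section
/- (Kruskal–Katona, Lovász form, set version) Let X be a set, s ≤ t positive integers, A a family of t-element subsets of X, and B the family of all s-element subsets of members of A. If |A| ≥ binom(n,t) for a positive integer n ≥ t, then |B| ≥ binom(n,s). -/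
open Finset

attribute [-instance] instDecidableEqFin

private lemma choose_strict_aux {m n t : ℕ} (ht : 1 ≤ t) (htn : t ≤ n) (hmn : m < n) :
    m.choose t < n.choose t := by
  obtain ⟨n, rfl⟩ : ∃ k, n = k + 1 := ⟨n - 1, by omega⟩
  calc m.choose t ≤ n.choose t := Nat.choose_le_choose _ (by omega)
    _ < (n+1).choose t := by
        obtain ⟨t, rfl⟩ : ∃ k, t = k + 1 := ⟨t - 1, by omega⟩
        have h1 := Nat.choose_succ_succ n t
        simp only [Nat.succ_eq_add_one] at h1
        have : 0 < n.choose t := Nat.choose_pos (by omega)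
        omega

/-- Kruskal–Katona theorem, Lovász form (set version): if `A` is a family of `t`-element
subsets of `X` with `|A| ≥ C(n,t)`, and `B` is the family of all `s`-element subsets of
members of `A`, then `|B| ≥ C(n,s)`. -/
theorem stmt4 {X : Type*} [DecidableEq X] (s t n : ℕ) (hs : 0 < s) (hst : s ≤ t)
    (htn : t ≤ n) (A : Finset (Finset X)) (hA : ∀ T ∈ A, T.card = t)
    (hcard : n.choose t ≤ A.card) :
    n.choose s ≤ (A.biUnion (fun T => T.powersetCard s)).card := by
  classical
  set U : Finset X := A.biUnion id with hU
  have hTU : ∀ T ∈ A, T ⊆ U := fun T hT => subset_biUnion_of_mem id hT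
  set m : ℕ := U.card with hm
  -- A injects into powersetCard t U
  have hAsub : A ⊆ U.powersetCard t := fun T hT =>
    mem_powersetCard.2 ⟨hTU T hT, hA T hT⟩
  have hAle : A.card ≤ m.choose t := by
    calc A.card ≤ (U.powersetCard t).card := card_le_card hAsub
      _ = m.choose t := by rw [card_powersetCard]
  have hnm : n ≤ m := by
    by_contra h
    push_neg at h
    exact absurd (hcard.trans hAle) (not_le.2 (choose_strict_aux (by omega) htn h))
  have hmpos : 0 < m := by omega
  -- embedding into Fin m
  let e := U.equivFin
  let g : X → Fin m := fun x => if h : x ∈ U then e ⟨x, h⟩ else ⟨0, hmpos⟩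
  let f : Fin m → X := fun i => (e.symm i : X)
  have hfU : ∀ i, f i ∈ U := fun i => (e.symm i).2
  have hgf : ∀ i, g (f i) = i := by
    intro i
    simp only [g, dif_pos (hfU i), f]
    rw [show (⟨(e.symm i : X), hfU i⟩ : {x // x ∈ U}) = e.symm i from Subtype.ext rfl]
    simp
  have hfg : ∀ x ∈ U, f (g x) = x := by
    intro x hx
    simp only [g, dif_pos hx, f]
    simp
  have hfinj : Function.Injective f := fun i j h => by
    rw [← hgf i, ← hgf j, h]
  -- the image family
  let A' : Finset (Finset (Fin m)) := A.image (fun T => T.image g)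
  have hginjT : ∀ T ∈ A, Set.InjOn g T := by
    intro T hT x hx y hy hxy
    have := congrArg f hxy
    rwa [hfg x (hTU T hT hx), hfg y (hTU T hT hy)] at this
  have hA'size : (A' : Set (Finset (Fin m))).Sized t := by
    intro T' hT'
    simp only [A', coe_image, Set.mem_image, mem_coe] at hT'
    obtain ⟨T, hT, rfl⟩ := hT'
    rw [card_image_of_injOn (hginjT T hT)]
    exact hA T hT
  have hA'card : A.card = A'.card := by
    refine (card_image_of_injOn ?_).symm
    intro T1 h1 T2 h2 h12
    have h12' : T1.image g = T2.image g := h12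
    have key : ∀ T ∈ A, (T.image g).image f = T := by
      intro T hT
      rw [image_image]
      refine image_congr (fun x hx => hfg x (hTU T hT hx)) |>.trans image_id
    rw [← key T1 h1, ← key T2 h2, h12']
  have h2 : n.choose t ≤ A'.card := by rw [← hA'card]; exact hcard
  have kk := Finset.kruskal_katona_lovasz_form (𝒜 := A') (Nat.sub_le t s) htn hnm hA'size h2
  rw [Nat.sub_sub_self hst] at kk
  refine kk.trans ?_
  -- inject iterated shadow of A' into the biUnion
  refine card_le_card_of_injOn (fun S => S.image f) ?_ ?_
  · intro S hS
    rw [mem_coe] at hS ⊢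
    rw [mem_shadow_iterate_iff_exists_sdiff] at hS
    obtain ⟨T', hT', hST, hsd⟩ := hS
    simp only [A', mem_image] at hT'
    obtain ⟨T, hT, rfl⟩ := hT'
    have hT'card : (T.image g).card = t := by
      rw [card_image_of_injOn (hginjT T hT)]; exact hA T hT
    have hScard : S.card = s := by
      have h1 := card_sdiff_of_subset hST
      have h2 := card_le_card hST
      omega
    rw [mem_biUnion]
    refine ⟨T, hT, mem_powersetCard.2 ⟨?_, ?_⟩⟩
    · intro x hx
      simp only [mem_image] at hx
      obtain ⟨i, hi, rfl⟩ := hx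
      have : i ∈ T.image g := hST hi
      simp only [mem_image] at this
      obtain ⟨y, hy, rfl⟩ := this
      rwa [hfg y (hTU T hT hy)]
    · rw [card_image_of_injective _ hfinj, hScard]
  · intro S1 _ S2 _ h
    have h' : S1.image f = S2.image f := h
    have : ∀ S : Finset (Fin m), (S.image f).image g = S := by
      intro S
      rw [image_image]
      refine (image_congr (fun i _ => hgf i)).trans image_id
    rw [← this S1, ← this S2, h']
end

section
/- If a graph G contains at least binom(n,t) copies of K_t (as vertex subsets spanning cliques) for some n ≥ t, then for every s ≤ t, G contains at least binom(n,s) copies of K_s. -/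
open Finset FinsetFamily

set_option maxHeartbeats 1000000 in
/-- Graph form of Kruskal–Katona: if `G` contains at least `C(n,t)` copies of `K_t`
with `t ≤ n`, then for every `s ≤ t` it contains at least `C(n,s)` copies of `K_s`. -/
theorem stmt5 {V : Type*} [Fintype V] (G : SimpleGraph V) (n s t : ℕ) (hst : s ≤ t)
    (htn : t ≤ n) (hG : n.choose t ≤ cliqueCount G t) :
    n.choose s ≤ cliqueCount G s := by
  letI : DecidableEq V := Classical.decEq _
  letI : DecidableRel G.Adj := Classical.decRel _
  have hcc : ∀ m : ℕ, cliqueCount G m = #(G.cliqueFinset m) := by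
    intro m; rw [cliqueCount]
  rw [hcc] at hG ⊢
  set M := max n (Fintype.card V) with hM
  have hcard : Fintype.card V ≤ M := le_max_right _ _
  have hnM : n ≤ M := le_max_left _ _
  let f : V ↪ Fin M :=
    (Fintype.equivFin V).toEmbedding.trans (Fin.castLEEmb hcard)
  let 𝒜 : Finset (Finset (Fin M)) := (G.cliqueFinset t).image (Finset.map f)
  have h𝒜card : #𝒜 = #(G.cliqueFinset t) :=
    Finset.card_image_of_injective _ (Finset.map_injective f)
  have h𝒜sized : (𝒜 : Set (Finset (Fin M))).Sized t := by
    intro A hA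
    simp only [𝒜, coe_image, Set.mem_image, mem_coe, SimpleGraph.mem_cliqueFinset_iff] at hA
    obtain ⟨B, hB, rfl⟩ := hA
    rw [Finset.card_map]
    exact hB.2
  have hkk := Finset.kruskal_katona_lovasz_form (i := t - s) (r := t) (k := n)
    (Nat.sub_le _ _) htn hnM h𝒜sized (by rw [h𝒜card]; exact hG)
  rw [Nat.sub_sub_self hst] at hkk
  refine hkk.trans (le_trans (Finset.card_le_card ?_)
    (le_of_eq (Finset.card_image_of_injective _ (Finset.map_injective f))))
  · intro B hB
    rw [Finset.mem_shadow_iterate_iff_exists_sdiff] at hB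
    obtain ⟨A, hA, hBA, hcardBA⟩ := hB
    simp only [𝒜, mem_image, SimpleGraph.mem_cliqueFinset_iff] at hA
    obtain ⟨C, hC, rfl⟩ := hA
    obtain ⟨B', hB'C, rfl⟩ := Finset.subset_map_iff.1 hBA
    refine mem_image.2 ⟨B', ?_, rfl⟩
    rw [SimpleGraph.mem_cliqueFinset_iff]
    constructor
    · exact hC.1.subset hB'C
    · have h1 : #(C.map f \ B'.map f) = #(C.map f) - #(B'.map f) :=
        Finset.card_sdiff_of_subset (Finset.map_subset_map.2 hB'C)
      rw [hcardBA, Finset.card_map, Finset.card_map, hC.2] at h1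
      have h2 : #B' ≤ t := hC.2 ▸ Finset.card_le_card hB'C
      omega
end

section
/- Suppose for each i with 1 ≤ i ≤ t the number of independent sets of size i in an n-vertex graph H is at most M_i, where M_i = binom(n,i) for i ≤ t/8 and M_i = Q^i for t/8 < i ≤ t (with Q ≥ 1). Then for a uniformly random map π from a t-set K into V(H), the probability that π(K) is independent in H is at most Σ_{i=1}^{t/8} binom(n,i)(i/n)^t + Σ_{i=t/8+1}^{t} Q^i (i/n)^t ≤ 2·n^{-(7t/8)}·t^t + 2·Q^t·(t/n)^t. -/
open Finset

lemma two_mul_pow_le' {i t : ℕ} (ht : i + 1 ≤ t) : 2 * (i : ℝ) ^ t ≤ ((i : ℝ) + 1) ^ t := by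
  rcases Nat.eq_zero_or_pos i with hi | hi
  · subst hi
    rw [Nat.cast_zero, zero_pow (by omega), zero_add, one_pow]
    norm_num
  · have hi1 : (1 : ℝ) ≤ (i : ℝ) := by exact_mod_cast hi
    have hipos : (0 : ℝ) < i := by linarith
    have hb : (2 : ℝ) ≤ (1 + 1 / (i : ℝ)) ^ (i + 1) := by
      have hba : (-2 : ℝ) ≤ 1 / (i : ℝ) := by
        have : (0:ℝ) ≤ 1 / i := by positivity
        linarith
      have := one_add_mul_le_pow hba (i + 1)
      have h2 : (2 : ℝ) ≤ 1 + (↑(i + 1) : ℝ) * (1 / (i : ℝ)) := by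
        rw [Nat.cast_add, Nat.cast_one]
        have hii : ((i : ℝ) + 1) * (1 / i) = 1 + 1 / i := by field_simp
        rw [hii]
        have : (0:ℝ) < 1 / i := by positivity
        linarith
      linarith
    have h11 : (1:ℝ) ≤ 1 + 1 / i := by
      have : (0:ℝ) < 1 / i := by positivity
      linarith
    have hpow : ((1 : ℝ) + 1 / i) ^ (i + 1) ≤ (1 + 1 / i) ^ t :=
      pow_le_pow_right₀ h11 ht
    have hident : ((i : ℝ) + 1) ^ t = (i : ℝ) ^ t * (1 + 1 / i) ^ t := by
      rw [← mul_pow]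
      congr 1
      field_simp
    rw [hident]
    calc 2 * (i : ℝ) ^ t ≤ ((1 + 1 / (i : ℝ)) ^ (i + 1)) * (i : ℝ) ^ t :=
          mul_le_mul_of_nonneg_right hb (by positivity)
      _ ≤ (i : ℝ) ^ t * (1 + 1 / i) ^ t := by
          rw [mul_comm]
          exact mul_le_mul_of_nonneg_left hpow (by positivity)

lemma sum_geom_le' (f : ℕ → ℝ) (s t : ℕ) (hst : s ≤ t) (hft : 0 ≤ f t)
    (hf : ∀ i, s ≤ i → i < t → 2 * f i ≤ f (i + 1)) :
    ∑ i ∈ Icc s t, f i ≤ 2 * f t := by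
  have hpt : ∀ j, j ≤ t - s → 2 ^ j * f (t - j) ≤ f t := by
    intro j
    induction j with
    | zero => intro _; simp
    | succ j ih =>
      intro hj
      have h1 : t - (j + 1) < t := by omega
      have h2 : t - (j + 1) + 1 = t - j := by omega
      have h3 : s ≤ t - (j + 1) := by omega
      have hstep := hf _ h3 h1
      rw [h2] at hstep
      calc (2 : ℝ) ^ (j + 1) * f (t - (j + 1)) = 2 ^ j * (2 * f (t - (j + 1))) := by ring
        _ ≤ 2 ^ j * f (t - j) := mul_le_mul_of_nonneg_left hstep (by positivity)
        _ ≤ f t := ih (by omega)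
  have hpoint : ∀ i ∈ Icc s t, f i ≤ (1 / 2 : ℝ) ^ (t - i) * f t := by
    intro i hi
    rw [mem_Icc] at hi
    have := hpt (t - i) (by omega)
    rw [show t - (t - i) = i by omega] at this
    rw [div_pow, one_pow, div_mul_eq_mul_div, le_div_iff₀ (by positivity)]
    calc f i * 2 ^ (t - i) = 2 ^ (t - i) * f i := by ring
      _ ≤ f t := this
      _ = 1 * f t := by ring
  calc ∑ i ∈ Icc s t, f i ≤ ∑ i ∈ Icc s t, (1 / 2 : ℝ) ^ (t - i) * f t :=
        sum_le_sum hpoint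
    _ = (∑ i ∈ Icc s t, (1 / 2 : ℝ) ^ (t - i)) * f t := by rw [sum_mul]
    _ ≤ 2 * f t := by
        apply mul_le_mul_of_nonneg_right _ hft
        calc ∑ i ∈ Icc s t, (1 / 2 : ℝ) ^ (t - i)
            ≤ ∑ i ∈ range (t + 1), (1 / 2 : ℝ) ^ (t - i) := by
              apply sum_le_sum_of_subset_of_nonneg
              · intro i hi
                rw [mem_Icc] at hi
                rw [mem_range]
                omega
              · intros; positivity
          _ = ∑ i ∈ range (t + 1), (1 / 2 : ℝ) ^ i := by
              rw [← Finset.sum_range_reflect]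
              apply sum_congr rfl
              intro i hi
              rw [mem_range] at hi
              congr 1
              omega
          _ ≤ 2 := sum_geometric_two_le _


lemma ratio_div {i t : ℕ} (n : ℝ) (hit : i + 1 ≤ t) (hn : 0 < n) :
    2 * ((i : ℝ) / n) ^ t ≤ (((i : ℝ) + 1) / n) ^ t := by
  rw [div_pow, div_pow, show 2 * ((i : ℝ) ^ t / n ^ t) = (2 * (i : ℝ) ^ t) / n ^ t by ring]
  gcongr
  exact two_mul_pow_le' hit

/-- Suppose the number of independent sets of size `i` in the `n`-vertex graph `H` is at
most `C(n,i)` for `i ≤ t/8` (automatic) and at most `Q^i` for `t/8 < i ≤ t`, with `Q ≥ 1`.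
Then the probability that a uniformly random map `π` from a `t`-set `K` to `V(H)` has
independent image is at most
`Σ_{i=1}^{t/8} C(n,i)(i/n)^t + Σ_{i=t/8+1}^{t} Q^i (i/n)^t ≤ 2n^{-7t/8}t^t + 2Q^t(t/n)^t`. -/
theorem stmt17 {K V : Type*} [Fintype K] [DecidableEq K] [Fintype V] [DecidableEq V]
    (H : SimpleGraph V) [DecidableRel H.Adj] (t n : ℕ) (Q : ℝ)
    (ht : Fintype.card K = t) (hn : Fintype.card V = n)
    (ht1 : 1 ≤ t) (htn : t ≤ n) (hQ1 : 1 ≤ Q) (hQn : Q * t ≤ n)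
    (hMsmall : ∀ i : ℕ, i ≤ t / 8 → indepCount H i ≤ n.choose i)
    (hMbig : ∀ i : ℕ, t / 8 < i → i ≤ t → (indepCount H i : ℝ) ≤ Q ^ i) :
    ((univ.filter (fun π : K → V =>
        ∀ a ∈ univ.image π, ∀ b ∈ univ.image π, ¬H.Adj a b)).card : ℝ) / (n : ℝ) ^ t ≤
      (∑ i ∈ Finset.Icc 1 (t / 8), (n.choose i : ℝ) * ((i : ℝ) / n) ^ t) +
        ∑ i ∈ Finset.Icc (t / 8 + 1) t, Q ^ i * ((i : ℝ) / n) ^ t ∧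
    (∑ i ∈ Finset.Icc 1 (t / 8), (n.choose i : ℝ) * ((i : ℝ) / n) ^ t) +
        (∑ i ∈ Finset.Icc (t / 8 + 1) t, Q ^ i * ((i : ℝ) / n) ^ t) ≤
      2 * (n : ℝ) ^ (-(7 * (t : ℝ) / 8)) * (t : ℝ) ^ t + 2 * Q ^ t * ((t : ℝ) / n) ^ t := by
  classical
  have hnK : Nonempty K := Fintype.card_pos_iff.mp (by omega)
  have hn0 : 0 < n := ht1.trans htn
  have hn0' : (0 : ℝ) < n := by exact_mod_cast hn0
  have hn1' : (1 : ℝ) ≤ n := by exact_mod_cast hn0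
  have hQ0 : (0 : ℝ) < Q := lt_of_lt_of_le one_pos hQ1
  set m := t / 8 with hm
  have hmt : m < t := Nat.div_lt_self (by omega) (by norm_num)
  have hic : ∀ i, indepCount H i = ((Hᶜ).cliqueFinset i).card := by
    intro i
    unfold indepCount cliqueCount
    congr!
  set A := univ.filter (fun π : K → V =>
      ∀ a ∈ univ.image π, ∀ b ∈ univ.image π, ¬H.Adj a b) with hA
  -- Part 1: counting
  have keyN : A.card ≤ ∑ i ∈ Icc 1 t, indepCount H i * i ^ t := by
    set B := (Icc 1 t).biUnion (fun i => (Hᶜ).cliqueFinset i) with hB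
    have hmem : ∀ π ∈ A, univ.image π ∈ B := by
      intro π hπ
      rw [hA, mem_filter] at hπ
      obtain ⟨-, hπ⟩ := hπ
      refine mem_biUnion.2 ⟨(univ.image π).card, ?_, ?_⟩
      · rw [mem_Icc]
        refine ⟨card_pos.2 (univ_nonempty.image π), ?_⟩
        calc (univ.image π).card ≤ univ.card := card_image_le
          _ = t := by rw [card_univ, ht]
      · rw [SimpleGraph.mem_cliqueFinset_iff]
        refine ⟨?_, rfl⟩
        intro a ha b hb hab
        rw [SimpleGraph.compl_adj]
        exact ⟨hab, hπ a (Finset.mem_coe.mp ha) b (Finset.mem_coe.mp hb)⟩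
    have hdisj : (↑(Icc 1 t) : Set ℕ).PairwiseDisjoint (fun i => (Hᶜ).cliqueFinset i) := by
      intro i _ j _ hij
      simp only [Function.onFun]
      rw [Finset.disjoint_left]
      intro S hSi hSj
      have h1 := (SimpleGraph.mem_cliqueFinset_iff.mp hSi).card_eq
      have h2 := (SimpleGraph.mem_cliqueFinset_iff.mp hSj).card_eq
      exact hij (by omega)
    calc A.card = ∑ S ∈ B, (A.filter (fun π => univ.image π = S)).card :=
          card_eq_sum_card_fiberwise hmem
      _ ≤ ∑ S ∈ B, S.card ^ t := by
          apply sum_le_sum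
          intro S hS
          calc (A.filter (fun π => univ.image π = S)).card
              ≤ (Fintype.piFinset (fun _ : K => S)).card := by
                apply card_le_card
                intro π hπ
                rw [mem_filter] at hπ
                rw [Fintype.mem_piFinset]
                intro k
                rw [← hπ.2]
                exact mem_image_of_mem π (mem_univ k)
            _ = S.card ^ t := by
                rw [Fintype.card_piFinset, prod_const, card_univ, ht]
      _ = ∑ i ∈ Icc 1 t, ∑ S ∈ (Hᶜ).cliqueFinset i, S.card ^ t := sum_biUnion hdisj
      _ = ∑ i ∈ Icc 1 t, indepCount H i * i ^ t := by
          apply sum_congr rfl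
          intro i _
          rw [sum_congr rfl
            (fun S hS => by rw [(SimpleGraph.mem_cliqueFinset_iff.mp hS).card_eq]),
            sum_const, smul_eq_mul, hic]
  have key1 : (A.card : ℝ) / (n : ℝ) ^ t ≤
      ∑ i ∈ Icc 1 t, (indepCount H i : ℝ) * ((i : ℝ) / n) ^ t := by
    rw [div_le_iff₀ (by positivity)]
    calc (A.card : ℝ) ≤ ((∑ i ∈ Icc 1 t, indepCount H i * i ^ t : ℕ) : ℝ) := by
          exact_mod_cast keyN
      _ = ∑ i ∈ Icc 1 t, (indepCount H i : ℝ) * (i : ℝ) ^ t := by push_cast; ring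
      _ = (∑ i ∈ Icc 1 t, (indepCount H i : ℝ) * ((i : ℝ) / n) ^ t) * (n : ℝ) ^ t := by
          rw [sum_mul]
          apply sum_congr rfl
          intro i _
          rw [div_pow]
          field_simp
  have hIccsplit : ∀ g : ℕ → ℝ,
      ∑ i ∈ Icc 1 t, g i = ∑ i ∈ Icc 1 m, g i + ∑ i ∈ Icc (m + 1) t, g i := by
    intro g
    rw [show (1 : ℕ) = 0 + 1 from rfl, Finset.Icc_add_one_left_eq_Ioc,
      Finset.Icc_add_one_left_eq_Ioc, zero_add, Finset.Icc_add_one_left_eq_Ioc]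
    exact (Finset.sum_Ioc_consecutive g (Nat.zero_le m) hmt.le).symm
  have part1 : (A.card : ℝ) / (n : ℝ) ^ t ≤
      (∑ i ∈ Icc 1 m, (n.choose i : ℝ) * ((i : ℝ) / n) ^ t) +
        ∑ i ∈ Icc (m + 1) t, Q ^ i * ((i : ℝ) / n) ^ t := by
    refine key1.trans ?_
    rw [hIccsplit (fun i => (indepCount H i : ℝ) * ((i : ℝ) / n) ^ t)]
    apply add_le_add
    · apply sum_le_sum
      intro i hi
      rw [mem_Icc] at hi
      have := hMsmall i hi.2
      have hc : (indepCount H i : ℝ) ≤ (n.choose i : ℝ) := by exact_mod_cast this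
      exact mul_le_mul_of_nonneg_right hc (by positivity)
    · apply sum_le_sum
      intro i hi
      rw [mem_Icc] at hi
      exact mul_le_mul_of_nonneg_right (hMbig i (by omega) hi.2) (by positivity)
  -- Part 2
  have hS2 : ∑ i ∈ Icc (m + 1) t, Q ^ i * ((i : ℝ) / n) ^ t ≤
      2 * Q ^ t * ((t : ℝ) / n) ^ t := by
    have hgeo := sum_geom_le' (fun i => Q ^ i * ((i : ℝ) / n) ^ t) (m + 1) t
      (by omega) (by positivity) ?_
    · calc ∑ i ∈ Icc (m + 1) t, Q ^ i * ((i : ℝ) / n) ^ t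
          ≤ 2 * (Q ^ t * ((t : ℝ) / n) ^ t) := hgeo
        _ = 2 * Q ^ t * ((t : ℝ) / n) ^ t := by ring
    · intro i _ hi2
      beta_reduce
      push_cast
      calc 2 * (Q ^ i * ((i : ℝ) / n) ^ t) = Q ^ i * (2 * ((i : ℝ) / n) ^ t) := by ring
        _ ≤ Q ^ (i + 1) * (((i : ℝ) + 1) / n) ^ t := by
            apply mul_le_mul (pow_le_pow_right₀ hQ1 (Nat.le_succ i))
              (ratio_div (n : ℝ) (by omega) hn0') (by positivity) (by positivity)
  have hS1 : ∑ i ∈ Icc 1 m, (n.choose i : ℝ) * ((i : ℝ) / n) ^ t ≤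
      2 * (n : ℝ) ^ (-(7 * (t : ℝ) / 8)) * (t : ℝ) ^ t := by
    rcases Nat.eq_zero_or_pos m with h0 | hmpos
    · rw [h0]
      simp only [show Icc 1 0 = (∅ : Finset ℕ) by rfl, sum_empty]
      positivity
    · have hgeo := sum_geom_le' (fun i => (n.choose i : ℝ) * ((i : ℝ) / n) ^ t) 1 m
        hmpos (by positivity) ?_
      · have hcm : (n.choose m : ℝ) ≤ (n : ℝ) ^ m := by
          exact_mod_cast Nat.choose_le_pow n m
        have hmtR : ((m : ℝ) / n) ^ t ≤ ((t : ℝ) / n) ^ t := by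
          have hmm : (m : ℝ) ≤ (t : ℝ) := by exact_mod_cast hmt.le
          gcongr
        have hrpow : (n : ℝ) ^ m / (n : ℝ) ^ t ≤ (n : ℝ) ^ (-(7 * (t : ℝ) / 8)) := by
          rw [← Real.rpow_natCast (n : ℝ) m, ← Real.rpow_natCast (n : ℝ) t,
            ← Real.rpow_sub hn0']
          apply Real.rpow_le_rpow_of_exponent_le hn1'
          have h8m : 8 * m ≤ t := by omega
          have h8m' : (8 : ℝ) * m ≤ t := by exact_mod_cast h8m
          linarith
        calc ∑ i ∈ Icc 1 m, (n.choose i : ℝ) * ((i : ℝ) / n) ^ t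
            ≤ 2 * ((n.choose m : ℝ) * ((m : ℝ) / n) ^ t) := hgeo
          _ ≤ 2 * ((n : ℝ) ^ m * ((t : ℝ) / n) ^ t) := by
              apply mul_le_mul_of_nonneg_left
                (mul_le_mul hcm hmtR (by positivity) (by positivity)) (by norm_num)
          _ = 2 * ((n : ℝ) ^ m / (n : ℝ) ^ t) * (t : ℝ) ^ t := by
              rw [div_pow]; ring
          _ ≤ 2 * (n : ℝ) ^ (-(7 * (t : ℝ) / 8)) * (t : ℝ) ^ t := by
              apply mul_le_mul_of_nonneg_right
                (mul_le_mul_of_nonneg_left hrpow (by norm_num)) (by positivity)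
      · intro i hi1 hi2
        beta_reduce
        push_cast
        have hci : (n.choose i : ℝ) ≤ (n.choose (i + 1) : ℝ) := by
          exact_mod_cast Nat.choose_le_succ_of_lt_half_left (show i < n / 2 by omega)
        calc 2 * ((n.choose i : ℝ) * ((i : ℝ) / n) ^ t)
            = (n.choose i : ℝ) * (2 * ((i : ℝ) / n) ^ t) := by ring
          _ ≤ (n.choose (i + 1) : ℝ) * (((i : ℝ) + 1) / n) ^ t := by
              apply mul_le_mul hci (ratio_div (n : ℝ) (by omega) hn0')
                (by positivity) (by positivity)
  exact ⟨part1, add_le_add hS1 hS2⟩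
end
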